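/- Let G be a group with finite generating set, φ : G → ℝ a function, Λ ∈ ℝ, and write W_n = {g ∈ G : |g| = n}. Suppose the central limit theorem with Berry–Esseen rate holds: (1/#W_n) #{g ∈ W_n : (φ(g) − nΛ)/√n ≤ x} = N_σ(x) + O(n^{-1/2}) uniformly in x, where N_σ is the normal distribution function with variance σ² > 0. If H ⊆ G is a subset on which φ(·) − Λ|·| is bounded, then #(W_n ∩ H)/#W_n = O(n^{-1/2}); in particular the asymptotic density of H in W_n is zero. -/

import Mathlib

/-- The word length of `g` with respect to `S ∪ S⁻¹`. -/
noncomputable def wordLength {G : Type*} [Group G] (S : Set G) (g : G) : ℕ :=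
  sInf {n | ∃ w : List G, w.length = n ∧ (∀ x ∈ w, x ∈ S ∨ x⁻¹ ∈ S) ∧ w.prod = g}

/-- If the central limit theorem with Berry–Esseen rate holds for `φ`, then any subset `H`
on which `φ(·) − Λ|·|` is bounded has density `O(n^{-1/2})` in the spheres `W_n`. -/
theorem density_of_bounded_set_sqrt_decay
    {G : Type*} [Group G] (S : Finset G) (hS : Subgroup.closure (S : Set G) = ⊤)
    (φ : G → ℝ) (Λ : ℝ) (σ : ℝ) (hσ : 0 < σ)
    (hWfin : ∀ n : ℕ, {g : G | wordLength (S : Set G) g = n}.Finite)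
    (hWne : ∀ n : ℕ, {g : G | wordLength (S : Set G) g = n}.Nonempty)
    (Nσ : ℝ → ℝ)
    (hNσ : ∀ x : ℝ, Nσ x =
      (Real.sqrt (2 * Real.pi) * σ)⁻¹ * ∫ t in Set.Iic x, Real.exp (-t ^ 2 / (2 * σ ^ 2)))
    (C : ℝ)
    (hCLT : ∀ n : ℕ, 1 ≤ n → ∀ x : ℝ,
      |((Nat.card {g : G | wordLength (S : Set G) g = n ∧
            (φ g - n * Λ) / Real.sqrt n ≤ x} : ℝ) /
          (Nat.card {g : G | wordLength (S : Set G) g = n} : ℝ)) - Nσ x|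
        ≤ C / Real.sqrt n)
    (H : Set G) (M : ℝ)
    (hM : ∀ g ∈ H, |φ g - Λ * (wordLength (S : Set G) g : ℝ)| ≤ M) :
    ∃ C' > (0 : ℝ), ∀ n : ℕ, 1 ≤ n →
      (Nat.card {g : G | wordLength (S : Set G) g = n ∧ g ∈ H} : ℝ) /
          (Nat.card {g : G | wordLength (S : Set G) g = n} : ℝ)
        ≤ C' / Real.sqrt n := by
  set c : ℝ := (Real.sqrt (2 * Real.pi) * σ)⁻¹ with hc
  have hc0 : 0 < c := by
    apply inv_pos.2
    positivity
  set M' : ℝ := |M| with hM'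
  have hM'0 : 0 ≤ M' := abs_nonneg M
  refine ⟨2 * |C| + c * (2 * M' + 1), by positivity, fun n hn => ?_⟩
  have hsq : (0 : ℝ) < Real.sqrt n := Real.sqrt_pos.2 (by exact_mod_cast hn)
  set a : ℝ := M' / Real.sqrt n with ha
  set b : ℝ := -(M' + 1) / Real.sqrt n with hb
  have hba : b ≤ a := by
    apply div_le_div_of_nonneg_right ?_ hsq.le <;> linarith
  set A : ℝ → Set G := fun x =>
    {g : G | wordLength (S : Set G) g = n ∧ (φ g - n * Λ) / Real.sqrt n ≤ x} with hA
  have hAfin : ∀ x, (A x).Finite := fun x => (hWfin n).subset (fun g hg => hg.1)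
  have hincl : {g : G | wordLength (S : Set G) g = n ∧ g ∈ H} ⊆ A a \ A b := by
    rintro g ⟨hgW, hgH⟩
    have hbound := hM g hgH
    rw [hgW] at hbound
    have h1 : |φ g - (n : ℝ) * Λ| ≤ M' := by
      calc |φ g - (n : ℝ) * Λ| = |φ g - Λ * (n : ℝ)| := by ring_nf
        _ ≤ M := hbound
        _ ≤ M' := le_abs_self M
    rw [abs_le] at h1
    refine ⟨⟨hgW, by apply div_le_div_of_nonneg_right h1.2 hsq.le⟩, ?_⟩
    rintro ⟨-, hle⟩
    have h2 : -M' / Real.sqrt n ≤ (φ g - n * Λ) / Real.sqrt n := by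
      apply div_le_div_of_nonneg_right ?_ hsq.le
      linarith [h1.1]
    have h3 : b < -M' / Real.sqrt n := (div_lt_div_iff_of_pos_right hsq).2 (by linarith)
    exact absurd (hle.trans_lt h3) (not_lt.2 h2)
  have hcard : (Nat.card {g : G | wordLength (S : Set G) g = n ∧ g ∈ H} : ℝ)
      ≤ (Nat.card (A a) : ℝ) - (Nat.card (A b) : ℝ) := by
    have hAb_sub : A b ⊆ A a := fun g hg => ⟨hg.1, hg.2.trans hba⟩
    have h1 : Nat.card {g : G | wordLength (S : Set G) g = n ∧ g ∈ H}
        ≤ Nat.card (A a \ A b : Set G) := by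
      rw [Nat.card_coe_set_eq, Nat.card_coe_set_eq]
      exact Set.ncard_le_ncard hincl ((hAfin a).diff (t := A b))
    have h2 : Nat.card (A a \ A b : Set G) = Nat.card (A a) - Nat.card (A b) := by
      rw [Nat.card_coe_set_eq, Nat.card_coe_set_eq, Nat.card_coe_set_eq]
      exact Set.ncard_diff hAb_sub (hAfin b)
    have h3 : Nat.card (A b) ≤ Nat.card (A a) := by
      rw [Nat.card_coe_set_eq, Nat.card_coe_set_eq]
      exact Set.ncard_le_ncard hAb_sub (hAfin a)
    calc (Nat.card {g : G | wordLength (S : Set G) g = n ∧ g ∈ H} : ℝ)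
        ≤ (Nat.card (A a \ A b : Set G) : ℝ) := by exact_mod_cast h1
      _ = (Nat.card (A a) : ℝ) - (Nat.card (A b) : ℝ) := by
          rw [h2, Nat.cast_sub h3]
  set D : ℝ := (Nat.card {g : G | wordLength (S : Set G) g = n} : ℝ) with hD
  have hD0 : 0 < D := by
    have h : 0 < Nat.card {g : G | wordLength (S : Set G) g = n} := by
      rw [Nat.card_pos_iff]
      exact ⟨(hWne n).to_subtype, (hWfin n).to_subtype⟩
    rw [hD]
    exact_mod_cast h
  have hCLTa := hCLT n hn a
  have hCLTb := hCLT n hn b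
  rw [abs_le] at hCLTa hCLTb
  have hint : MeasureTheory.Integrable (fun t : ℝ => Real.exp (-t ^ 2 / (2 * σ ^ 2))) := by
    have h := integrable_exp_neg_mul_sq (b := (2 * σ ^ 2)⁻¹) (by positivity)
    convert h using 2 with t
    rw [neg_div, div_eq_inv_mul, neg_mul]
  have heq : (∫ t in Set.Iic a, Real.exp (-t ^ 2 / (2 * σ ^ 2)))
      - ∫ t in Set.Iic b, Real.exp (-t ^ 2 / (2 * σ ^ 2))
      = ∫ t in Set.Ioc b a, Real.exp (-t ^ 2 / (2 * σ ^ 2)) := by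
    rw [intervalIntegral.integral_Iic_sub_Iic (a := b) (b := a)
      hint.integrableOn hint.integrableOn, intervalIntegral.integral_of_le hba]
  have hle : (∫ t in Set.Ioc b a, Real.exp (-t ^ 2 / (2 * σ ^ 2)))
      ≤ ∫ _ in Set.Ioc b a, (1 : ℝ) := by
    apply MeasureTheory.setIntegral_mono_on hint.integrableOn
      (MeasureTheory.integrableOn_const (by simp) (by simp)) measurableSet_Ioc
    intro t _
    exact Real.exp_le_one_iff.2
      (div_nonpos_of_nonpos_of_nonneg (neg_nonpos.2 (sq_nonneg t)) (by positivity))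
  have hone : (∫ _ in Set.Ioc b a, (1 : ℝ)) = a - b := by
    simp [Real.volume_Ioc, ENNReal.toReal_ofReal (by linarith : (0:ℝ) ≤ a - b), hba]
  have hNab : Nσ a - Nσ b ≤ c * (a - b) := by
    rw [hNσ a, hNσ b, ← mul_sub, heq]
    exact mul_le_mul_of_nonneg_left (hle.trans_eq hone) hc0.le
  have hab : a - b = (2 * M' + 1) / Real.sqrt n := by
    rw [ha, hb, div_sub_div_same]
    ring_nf
  rw [hab] at hNab
  have hC : C / Real.sqrt n ≤ |C| / Real.sqrt n := by
    apply div_le_div_of_nonneg_right (le_abs_self C) hsq.le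
  calc (Nat.card {g : G | wordLength (S : Set G) g = n ∧ g ∈ H} : ℝ) / D
      ≤ ((Nat.card (A a) : ℝ) - (Nat.card (A b) : ℝ)) / D := by
        apply div_le_div_of_nonneg_right hcard hD0.le
    _ = (Nat.card (A a) : ℝ) / D - (Nat.card (A b) : ℝ) / D := sub_div _ _ _
    _ ≤ (Nσ a + C / Real.sqrt n) - (Nσ b - C / Real.sqrt n) := by
        have h1 := hCLTa.2
        have h2 := hCLTb.1
        rw [← hD] at h1 h2
        linarith
    _ ≤ c * ((2 * M' + 1) / Real.sqrt n) + 2 * (|C| / Real.sqrt n) := by linarith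
    _ = (2 * |C| + c * (2 * M' + 1)) / Real.sqrt n := by ring
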